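/- Let u : ℝ^d → ℝ^d be twice differentiable with |u(x)| = 1 for all x, and write P_{ij} = δ_{ij} − u_i u_j (a function of x). Then for every i ∈ {1,…,d} and every x: Σ_{j,p,l} P_{jp} ∂_{x_p}(P_{jl} ∂_{x_l} u_i) = Σ_{j,k,l} P_{ij} ∂_{x_k}(P_{kl} ∂_{x_l} u_j) + Σ_{p,j} (u_p ∂_{x_p} u_j)(∂_{x_j} u_i) − u_i Σ_{p,l,s} P_{pl} (∂_{x_l} u_s)(∂_{x_p} u_s). (This is the identity Tr_{[12]}((P_{u⊥}∇)(P_{u⊥}∇u)) = P_{u⊥}(∇·(P_{u⊥}∇u)) + (((u·∇)u)·∇)u − u (P_{u⊥}∇u : P_{u⊥}∇u).) -/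

import Mathlib

private lemma sum_rot {d : ℕ} (f : Fin d → Fin d → Fin d → ℝ) :
    ∑ a, ∑ b, ∑ c, f a b c = ∑ b, ∑ c, ∑ a, f a b c := by
  rw [Finset.sum_comm]
  exact Finset.sum_congr rfl fun b _ => Finset.sum_comm

private lemma key_alg {d : ℕ} (U : Fin d → ℝ) (D : Fin d → Fin d → ℝ) (H : Fin d → Fin d → Fin d → ℝ)
    (P : Fin d → Fin d → ℝ)
    (hP : ∀ a b, P a b = (if a = b then (1:ℝ) else 0) - U a * U b)
    (hU1 : ∑ s, U s * U s = 1)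
    (hO1 : ∀ a, ∑ s, U s * D a s = 0)
    (hO2 : ∀ a b, ∑ s, U s * H a b s = -∑ s, D a s * D b s)
    (i : Fin d) :
    (∑ j, ∑ p, ∑ l, P j p * (P j l * H p l i - (U j * D p l + U l * D p j) * D l i))
    = (∑ j, ∑ k, ∑ l, P i j * (P k l * H k l j - (U k * D k l + U l * D k k) * D l j))
      + (∑ p, ∑ j, (U p * D p j) * D j i)
      - U i * (∑ p, ∑ l, ∑ s, P p l * D l s * D p s) := by
  classical
  -- basic helpers
  have hUP : ∀ l, ∑ j, U j * P j l = 0 := by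
    intro l
    have h4 : ∀ j, U j * P j l = U j * (if j = l then (1:ℝ) else 0) - (U j * U j) * U l := by
      intro j; rw [hP]; ring
    rw [Finset.sum_congr rfl fun j _ => h4 j, Finset.sum_sub_distrib, ← Finset.sum_mul, hU1]
    simp
  have Psum' : ∀ (p : Fin d) (f : Fin d → ℝ),
      ∑ j, P j p * f j = f p - U p * ∑ j, U j * f j := by
    intro p f
    have h4 : ∀ j, P j p * f j = (if j = p then (1:ℝ) else 0) * f j - U p * (U j * f j) := by
      intro j; rw [hP]; ring
    rw [Finset.sum_congr rfl fun j _ => h4 j, Finset.sum_sub_distrib, ← Finset.mul_sum]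
    simp
  have Psum2 : ∀ (f : Fin d → ℝ),
      ∑ j, P i j * f j = f i - U i * ∑ j, U j * f j := by
    intro f
    have h4 : ∀ j, P i j * f j = (if i = j then (1:ℝ) else 0) * f j - U i * (U j * f j) := by
      intro j; rw [hP]; ring
    rw [Finset.sum_congr rfl fun j _ => h4 j, Finset.sum_sub_distrib, ← Finset.mul_sum]
    simp
  -- the quantity K = |((u·∇)u)|²  in factored form
  have hKK : ∀ (F : Fin d → Fin d → ℝ),
      (∑ k, ∑ l, (U k * U l) * (∑ s, F k s * F l s))
        = ∑ s, (∑ k, U k * F k s) * (∑ l, U l * F l s) := by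
    intro F
    have h1 : ∀ k l, (U k * U l) * (∑ s, F k s * F l s)
        = ∑ s, (U k * F k s) * (U l * F l s) := by
      intro k l
      rw [Finset.mul_sum]
      exact Finset.sum_congr rfl fun s _ => by ring
    rw [Finset.sum_congr rfl fun k _ => Finset.sum_congr rfl fun l _ => h1 k l]
    rw [sum_rot, sum_rot]
    exact Finset.sum_congr rfl fun s _ => (Finset.sum_mul_sum _ _ _ _).symm
  ------------------------------------------------------------------
  -- LHS
  ------------------------------------------------------------------
  have hz : ∀ p, ∑ j, U j * ∑ l, (P j l * H p l i - (U j * D p l + U l * D p j) * D l i)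
      = -∑ l, D p l * D l i := by
    intro p
    have h2 : ∀ j, U j * ∑ l, (P j l * H p l i - (U j * D p l + U l * D p j) * D l i)
        = ∑ l, U j * (P j l * H p l i - (U j * D p l + U l * D p j) * D l i) :=
      fun j => Finset.mul_sum _ _ _
    rw [Finset.sum_congr rfl fun j _ => h2 j, Finset.sum_comm]
    have h3 : ∀ l, ∑ j, U j * (P j l * H p l i - (U j * D p l + U l * D p j) * D l i)
        = -(D p l * D l i) := by
      intro l
      have h4 : ∀ j, U j * (P j l * H p l i - (U j * D p l + U l * D p j) * D l i)
          = (U j * P j l) * H p l i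
            - ((U j * U j) * (D p l * D l i) + (U j * D p j) * (U l * D l i)) :=
        fun j => by ring
      rw [Finset.sum_congr rfl fun j _ => h4 j, Finset.sum_sub_distrib,
          Finset.sum_add_distrib, ← Finset.sum_mul, hUP l, ← Finset.sum_mul,
          ← Finset.sum_mul, hU1, hO1 p]
      ring
    rw [Finset.sum_congr rfl fun l _ => h3 l, Finset.sum_neg_distrib]
  have hLHS : (∑ j, ∑ p, ∑ l, P j p * (P j l * H p l i - (U j * D p l + U l * D p j) * D l i))
      = (∑ p, ∑ l, P p l * H p l i) - (∑ p, D p p) * (∑ l, U l * D l i) := by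
    rw [Finset.sum_comm]
    have h1 : ∀ p, (∑ j, ∑ l, P j p * (P j l * H p l i - (U j * D p l + U l * D p j) * D l i))
        = ∑ j, P j p * ∑ l, (P j l * H p l i - (U j * D p l + U l * D p j) * D l i) :=
      fun p => Finset.sum_congr rfl fun j _ => (Finset.mul_sum _ _ _).symm
    rw [Finset.sum_congr rfl fun p _ => h1 p]
    rw [Finset.sum_congr rfl fun p _ =>
      Psum' p (fun j => ∑ l, (P j l * H p l i - (U j * D p l + U l * D p j) * D l i))]
    have h2 : ∀ p, (∑ l, (P p l * H p l i - (U p * D p l + U l * D p p) * D l i))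
          - U p * ∑ j, U j * ∑ l, (P j l * H p l i - (U j * D p l + U l * D p j) * D l i)
        = ∑ l, (P p l * H p l i - D p p * (U l * D l i)) := by
      intro p
      rw [hz p]
      rw [show U p * -∑ l, D p l * D l i = -∑ l, U p * (D p l * D l i) by
        rw [mul_neg, Finset.mul_sum]]
      rw [sub_neg_eq_add, ← Finset.sum_add_distrib]
      exact Finset.sum_congr rfl fun l _ => by ring
    rw [Finset.sum_congr rfl fun p _ => h2 p]
    rw [Finset.sum_mul, ← Finset.sum_sub_distrib]
    refine Finset.sum_congr rfl fun p _ => ?_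
    rw [Finset.sum_sub_distrib, Finset.mul_sum]
  ------------------------------------------------------------------
  -- RHS first triple sum
  ------------------------------------------------------------------
  have hUf : ∑ j, U j * ∑ k, ∑ l, (P k l * H k l j - (U k * D k l + U l * D k k) * D l j)
      = (∑ s, (∑ k, U k * D k s) * (∑ l, U l * D l s)) - (∑ k, ∑ s, D k s * D k s) := by
    have h2 : ∀ j, U j * ∑ k, ∑ l, (P k l * H k l j - (U k * D k l + U l * D k k) * D l j)
        = ∑ k, ∑ l, U j * (P k l * H k l j - (U k * D k l + U l * D k k) * D l j) := by
      intro j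
      rw [Finset.mul_sum]
      exact Finset.sum_congr rfl fun k _ => Finset.mul_sum _ _ _
    rw [Finset.sum_congr rfl fun j _ => h2 j, sum_rot]
    have h3 : ∀ k l, ∑ j, U j * (P k l * H k l j - (U k * D k l + U l * D k k) * D l j)
        = -(P k l * ∑ s, D k s * D l s) := by
      intro k l
      have h4 : ∀ j, U j * (P k l * H k l j - (U k * D k l + U l * D k k) * D l j)
          = P k l * (U j * H k l j) - (U k * D k l + U l * D k k) * (U j * D l j) :=
        fun j => by ring
      rw [Finset.sum_congr rfl fun j _ => h4 j, Finset.sum_sub_distrib, ← Finset.mul_sum,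
          ← Finset.mul_sum, hO2 k l, hO1 l]
      ring
    rw [Finset.sum_congr rfl fun k _ => Finset.sum_congr rfl fun l _ => h3 k l]
    have h5 : ∀ k l, -(P k l * ∑ s, D k s * D l s)
        = (U k * U l) * (∑ s, D k s * D l s)
          - (if k = l then (1:ℝ) else 0) * (∑ s, D k s * D l s) := by
      intro k l; rw [hP]; ring
    rw [Finset.sum_congr rfl fun k _ => Finset.sum_congr rfl fun l _ => h5 k l]
    have h6 : ∀ k, ∑ l, ((U k * U l) * (∑ s, D k s * D l s)
          - (if k = l then (1:ℝ) else 0) * (∑ s, D k s * D l s))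
        = (∑ l, (U k * U l) * (∑ s, D k s * D l s)) - ∑ s, D k s * D k s := by
      intro k
      rw [Finset.sum_sub_distrib]
      congr 1
      simp
    rw [Finset.sum_congr rfl fun k _ => h6 k, Finset.sum_sub_distrib, hKK D]
  have hRHS1 : (∑ j, ∑ k, ∑ l, P i j * (P k l * H k l j - (U k * D k l + U l * D k k) * D l j))
      = ((∑ p, ∑ l, P p l * H p l i)
          - ((∑ p, ∑ j, (U p * D p j) * D j i) + (∑ p, D p p) * (∑ l, U l * D l i)))
        - U i * ((∑ s, (∑ k, U k * D k s) * (∑ l, U l * D l s)) - (∑ k, ∑ s, D k s * D k s)) := by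
    have h1 : ∀ j, (∑ k, ∑ l, P i j * (P k l * H k l j - (U k * D k l + U l * D k k) * D l j))
        = P i j * ∑ k, ∑ l, (P k l * H k l j - (U k * D k l + U l * D k k) * D l j) := by
      intro j
      rw [Finset.mul_sum]
      exact Finset.sum_congr rfl fun k _ => (Finset.mul_sum _ _ _).symm
    rw [Finset.sum_congr rfl fun j _ => h1 j,
        Psum2 (fun j => ∑ k, ∑ l, (P k l * H k l j - (U k * D k l + U l * D k k) * D l j)),
        hUf]
    congr 1
    -- f i = PH i - (W i + tr * κ i)
    have h7 : ∀ k l, (P k l * H k l i - (U k * D k l + U l * D k k) * D l i)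
        = P k l * H k l i - ((U k * D k l) * D l i + D k k * (U l * D l i)) :=
      fun k l => by ring
    rw [Finset.sum_congr rfl fun k _ => Finset.sum_congr rfl fun l _ => h7 k l]
    have h8 : ∀ k, ∑ l, (P k l * H k l i - ((U k * D k l) * D l i + D k k * (U l * D l i)))
        = (∑ l, P k l * H k l i) - ((∑ l, (U k * D k l) * D l i) + D k k * (∑ l, U l * D l i)) := by
      intro k
      rw [Finset.sum_sub_distrib, Finset.sum_add_distrib, Finset.mul_sum]
    rw [Finset.sum_congr rfl fun k _ => h8 k, Finset.sum_sub_distrib, Finset.sum_add_distrib,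
        ← Finset.sum_mul]
  ------------------------------------------------------------------
  -- third term
  ------------------------------------------------------------------
  have hT3 : (∑ p, ∑ l, ∑ s, P p l * D l s * D p s)
      = (∑ k, ∑ s, D k s * D k s) - ∑ s, (∑ k, U k * D k s) * (∑ l, U l * D l s) := by
    have h1 : ∀ p l s, P p l * D l s * D p s
        = (if p = l then (1:ℝ) else 0) * (D l s * D p s) - (U p * U l) * (D l s * D p s) := by
      intro p l s; rw [hP]; ring
    rw [Finset.sum_congr rfl fun p _ => Finset.sum_congr rfl fun l _ =>
      Finset.sum_congr rfl fun s _ => h1 p l s]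
    have h2 : ∀ p l, ∑ s, ((if p = l then (1:ℝ) else 0) * (D l s * D p s)
          - (U p * U l) * (D l s * D p s))
        = (if p = l then (1:ℝ) else 0) * (∑ s, D l s * D p s)
          - (U p * U l) * (∑ s, D l s * D p s) := by
      intro p l
      rw [Finset.sum_sub_distrib, Finset.mul_sum, Finset.mul_sum]
    rw [Finset.sum_congr rfl fun p _ => Finset.sum_congr rfl fun l _ => h2 p l]
    have h3 : ∀ p, ∑ l, ((if p = l then (1:ℝ) else 0) * (∑ s, D l s * D p s)
          - (U p * U l) * (∑ s, D l s * D p s))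
        = (∑ s, D p s * D p s) - ∑ l, (U p * U l) * (∑ s, D l s * D p s) := by
      intro p
      rw [Finset.sum_sub_distrib]
      congr 1
      simp
    rw [Finset.sum_congr rfl fun p _ => h3 p, Finset.sum_sub_distrib]
    congr 1
    have h4 : ∀ p l, (U p * U l) * (∑ s, D l s * D p s)
        = (U p * U l) * (∑ s, D p s * D l s) := by
      intro p l
      congr 1
      exact Finset.sum_congr rfl fun s _ => by ring
    rw [Finset.sum_congr rfl fun p _ => Finset.sum_congr rfl fun l _ => h4 p l, hKK D]
  ------------------------------------------------------------------
  rw [hLHS, hRHS1, hT3]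
  ring

section Anal
variable {d : ℕ} (u : EuclideanSpace ℝ (Fin d) → EuclideanSpace ℝ (Fin d))

private lemma comp_diff (hu : Differentiable ℝ u) (s : Fin d) :
    Differentiable ℝ (fun y => u y s) := by
  intro y
  have h0 : HasFDerivAt (⇑(EuclideanSpace.proj (𝕜 := ℝ) s) ∘ u)
      ((EuclideanSpace.proj s).comp (fderiv ℝ u y)) y :=
    (EuclideanSpace.proj (𝕜 := ℝ) s).hasFDerivAt.comp y (hu y).hasFDerivAt
  exact (h0 : HasFDerivAt (fun y => u y s) _ y).differentiableAt

private lemma comp_fderiv (hu : Differentiable ℝ u) (y : EuclideanSpace ℝ (Fin d)) (s : Fin d)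
    (v : EuclideanSpace ℝ (Fin d)) :
    fderiv ℝ (fun z => u z s) y v = fderiv ℝ u y v s := by
  have h0 : HasFDerivAt (⇑(EuclideanSpace.proj (𝕜 := ℝ) s) ∘ u)
      ((EuclideanSpace.proj s).comp (fderiv ℝ u y)) y :=
    (EuclideanSpace.proj (𝕜 := ℝ) s).hasFDerivAt.comp y (hu y).hasFDerivAt
  have h : HasFDerivAt (fun z => u z s)
      ((EuclideanSpace.proj (𝕜 := ℝ) s).comp (fderiv ℝ u y)) y := h0
  rw [h.fderiv]; rfl

private lemma comp2_diff (hu2 : Differentiable ℝ (fderiv ℝ u)) (w : EuclideanSpace ℝ (Fin d))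
    (s : Fin d) : Differentiable ℝ (fun y => fderiv ℝ u y w s) := by
  intro y
  have h0 : HasFDerivAt (⇑(EuclideanSpace.proj (𝕜 := ℝ) s) ∘
      (⇑(ContinuousLinearMap.apply ℝ (EuclideanSpace ℝ (Fin d)) w) ∘ (fderiv ℝ u)))
      ((EuclideanSpace.proj s).comp
        ((ContinuousLinearMap.apply ℝ (EuclideanSpace ℝ (Fin d)) w).comp
          (fderiv ℝ (fderiv ℝ u) y))) y :=
    (EuclideanSpace.proj (𝕜 := ℝ) s).hasFDerivAt.comp y
      ((ContinuousLinearMap.apply ℝ (EuclideanSpace ℝ (Fin d)) w).hasFDerivAt.comp y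
        (hu2 y).hasFDerivAt)
  exact (h0 : HasFDerivAt (fun y => fderiv ℝ u y w s) _ y).differentiableAt

private lemma unit_sq (hnorm : ∀ x, ‖u x‖ = 1) (y : EuclideanSpace ℝ (Fin d)) :
    ∑ s, u y s * u y s = 1 := by
  have h := hnorm y
  rw [EuclideanSpace.norm_eq] at h
  have h2 : ∑ s, ‖u y s‖ ^ 2 = 1 := by
    have hnn : (0:ℝ) ≤ ∑ s, ‖u y s‖ ^ 2 :=
      Finset.sum_nonneg fun s _ => sq_nonneg _
    nlinarith [Real.sq_sqrt hnn]
  calc ∑ s, u y s * u y s = ∑ s, ‖u y s‖ ^ 2 := by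
        refine Finset.sum_congr rfl fun s _ => ?_
        rw [Real.norm_eq_abs, sq_abs, sq]
    _ = 1 := h2

private lemma orth1 (hu : Differentiable ℝ u) (hnorm : ∀ x, ‖u x‖ = 1)
    (y : EuclideanSpace ℝ (Fin d)) (a : Fin d) :
    ∑ s, u y s * fderiv ℝ u y (EuclideanSpace.single a (1:ℝ)) s = 0 := by
  have h1 : fderiv ℝ (fun z => ∑ s, u z s * u z s) y = 0 := by
    have he : (fun z : EuclideanSpace ℝ (Fin d) => ∑ s, u z s * u z s) = fun _ => (1:ℝ) :=
      funext fun z => unit_sq u hnorm z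
    rw [he]
    exact fderiv_const_apply 1
  have h3 : (∑ s, fderiv ℝ (fun z => u z s * u z s) y)
      (EuclideanSpace.single a (1:ℝ)) = 0 := by
    rw [← fderiv_fun_sum (fun s _ => ((comp_diff u hu s y).fun_mul (comp_diff u hu s y))), h1]
    rfl
  rw [ContinuousLinearMap.sum_apply] at h3
  have h4 : ∀ s, fderiv ℝ (fun z => u z s * u z s) y (EuclideanSpace.single a (1:ℝ))
      = u y s * fderiv ℝ u y (EuclideanSpace.single a (1:ℝ)) s
        + u y s * fderiv ℝ u y (EuclideanSpace.single a (1:ℝ)) s := by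
    intro s
    rw [fderiv_fun_mul (comp_diff u hu s y) (comp_diff u hu s y)]
    simp only [ContinuousLinearMap.add_apply, ContinuousLinearMap.coe_smul', Pi.smul_apply,
      smul_eq_mul]
    rw [comp_fderiv u hu y s]
  rw [Finset.sum_congr rfl fun s _ => h4 s, Finset.sum_add_distrib] at h3
  linarith

end Anal

/-- the identity
`Tr_{[12]}((P_{u⊥}∇)(P_{u⊥}∇u)) = P_{u⊥}(∇·(P_{u⊥}∇u)) + (((u·∇)u)·∇)u
  − u (P_{u⊥}∇u : P_{u⊥}∇u)`
for a twice differentiable unit vector field `u`, written componentwise: for every `i`,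
`Σ_{j,p,l} P_{jp} ∂_{x_p}(P_{jl} ∂_{x_l}u_i)
  = Σ_{j,k,l} P_{ij} ∂_{x_k}(P_{kl} ∂_{x_l}u_j) + Σ_{p,j} (u_p ∂_{x_p}u_j)(∂_{x_j}u_i)
    − u_i Σ_{p,l,s} P_{pl} (∂_{x_l}u_s)(∂_{x_p}u_s)`,
where `Pf y j p = δ_{jp} − u_j(y)u_p(y)` and `D a b = ∂_{x_a}u_b(x)`. -/
theorem stmt17 (d : ℕ) (hd : 2 ≤ d)
    (u : EuclideanSpace ℝ (Fin d) → EuclideanSpace ℝ (Fin d))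
    (hu : Differentiable ℝ u) (hu2 : Differentiable ℝ (fderiv ℝ u))
    (hnorm : ∀ x, ‖u x‖ = 1)
    (x : EuclideanSpace ℝ (Fin d))
    (Pf : EuclideanSpace ℝ (Fin d) → Fin d → Fin d → ℝ)
    (hPf : ∀ y j p, Pf y j p = (if j = p then (1 : ℝ) else 0) - u y j * u y p)
    (D : Fin d → Fin d → ℝ)
    (hD : ∀ a b, D a b = fderiv ℝ u x (EuclideanSpace.single a (1 : ℝ)) b) :
    ∀ i, (∑ j, ∑ p, ∑ l, Pf x j p *
          fderiv ℝ (fun y => Pf y j l *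
            fderiv ℝ u y (EuclideanSpace.single l (1 : ℝ)) i) x
            (EuclideanSpace.single p (1 : ℝ)))
      = (∑ j, ∑ k, ∑ l, Pf x i j *
            fderiv ℝ (fun y => Pf y k l *
              fderiv ℝ u y (EuclideanSpace.single l (1 : ℝ)) j) x
              (EuclideanSpace.single k (1 : ℝ)))
        + (∑ p, ∑ j, (u x p * D p j) * D j i)
        - u x i * (∑ p, ∑ l, ∑ s, Pf x p l * D l s * D p s) := by
  set Hh : Fin d → Fin d → Fin d → ℝ := fun a b s =>
    fderiv ℝ (fun z => fderiv ℝ u z (EuclideanSpace.single b (1:ℝ)) s) x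
      (EuclideanSpace.single a (1:ℝ)) with hHh
  -- second-order orthogonality relation
  have hO2x : ∀ a b, ∑ s, u x s * Hh a b s = -∑ s, D a s * D b s := by
    intro a b
    have h1 : fderiv ℝ (fun z : EuclideanSpace ℝ (Fin d) =>
        ∑ s, u z s * fderiv ℝ u z (EuclideanSpace.single b (1:ℝ)) s) x = 0 := by
      have he : (fun z : EuclideanSpace ℝ (Fin d) =>
          ∑ s, u z s * fderiv ℝ u z (EuclideanSpace.single b (1:ℝ)) s) = fun _ => (0:ℝ) :=
        funext fun z => orth1 u hu hnorm z b
      rw [he]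
      exact fderiv_const_apply 0
    have h3 : (∑ s, fderiv ℝ (fun z =>
        u z s * fderiv ℝ u z (EuclideanSpace.single b (1:ℝ)) s) x)
        (EuclideanSpace.single a (1:ℝ)) = 0 := by
      rw [← fderiv_fun_sum (fun s _ => ((comp_diff u hu s x).fun_mul
        (comp2_diff u hu2 (EuclideanSpace.single b (1:ℝ)) s x))), h1]
      rfl
    rw [ContinuousLinearMap.sum_apply] at h3
    have h4 : ∀ s, fderiv ℝ (fun z =>
        u z s * fderiv ℝ u z (EuclideanSpace.single b (1:ℝ)) s) x
          (EuclideanSpace.single a (1:ℝ))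
        = u x s * Hh a b s + D a s * D b s := by
      intro s
      rw [fderiv_fun_mul (comp_diff u hu s x)
        (comp2_diff u hu2 (EuclideanSpace.single b (1:ℝ)) s x)]
      simp only [ContinuousLinearMap.add_apply, ContinuousLinearMap.coe_smul', Pi.smul_apply,
        smul_eq_mul]
      rw [comp_fderiv u hu x s]
      simp only [hHh, hD]
      ring
    rw [Finset.sum_congr rfl fun s _ => h4 s, Finset.sum_add_distrib] at h3
    linarith
  -- product rule for the inner derivative
  have hprod : ∀ (j l p c : Fin d),
      fderiv ℝ (fun y => Pf y j l * fderiv ℝ u y (EuclideanSpace.single l (1:ℝ)) c) x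
          (EuclideanSpace.single p (1:ℝ))
        = Pf x j l * Hh p l c - (u x j * D p l + u x l * D p j) * D l c := by
    intro j l p c
    have hfe : (fun y => Pf y j l * fderiv ℝ u y (EuclideanSpace.single l (1:ℝ)) c)
        = fun y => ((if j = l then (1:ℝ) else 0) - u y j * u y l) *
            fderiv ℝ u y (EuclideanSpace.single l (1:ℝ)) c :=
      funext fun y => by rw [hPf]
    rw [hfe]
    have hq : DifferentiableAt ℝ (fun y : EuclideanSpace ℝ (Fin d) =>
        (if j = l then (1:ℝ) else 0) - u y j * u y l) x :=
      (differentiableAt_const _).sub ((comp_diff u hu j x).mul (comp_diff u hu l x))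
    rw [fderiv_fun_mul hq (comp2_diff u hu2 (EuclideanSpace.single l (1:ℝ)) c x)]
    simp only [ContinuousLinearMap.add_apply, ContinuousLinearMap.coe_smul', Pi.smul_apply,
      smul_eq_mul]
    have hqd : fderiv ℝ (fun y : EuclideanSpace ℝ (Fin d) =>
        (if j = l then (1:ℝ) else 0) - u y j * u y l) x (EuclideanSpace.single p (1:ℝ))
        = -(u x j * D p l + u x l * D p j) := by
      rw [fderiv_fun_sub (differentiableAt_const _) ((comp_diff u hu j x).fun_mul (comp_diff u hu l x))]
      simp only [ContinuousLinearMap.coe_sub', Pi.sub_apply, fderiv_fun_const, Pi.zero_apply,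
        ContinuousLinearMap.zero_apply]
      rw [fderiv_fun_mul (comp_diff u hu j x) (comp_diff u hu l x)]
      simp only [ContinuousLinearMap.add_apply, ContinuousLinearMap.coe_smul', Pi.smul_apply,
        smul_eq_mul]
      rw [comp_fderiv u hu x j, comp_fderiv u hu x l]
      simp only [hD]
      ring
    rw [hqd, hPf x j l]
    simp only [hHh, hD]
    ring
  intro i
  simp only [hprod]
  exact key_alg (fun s => u x s) D Hh (Pf x) (hPf x) (unit_sq u hnorm x)
    (fun a => by simp only [hD]; exact orth1 u hu hnorm x a) hO2x i
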